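/- Let m ≥ 1 and let k_1,…,k_m, l_1,…,l_m be integers with k_1 = 1, l_i ≥ 1 and k_i ≥ 1 for all i, and assume that it is not the case that m = 1 and l_1 = 1. Let λ ∈ ℂ be not a positive integer and set λ′ = λ − 1. Then λ·[{n^1, l_1, n^{k_2}, l_2, …, n^{k_m}, l_m}; λ] − [{n^1, l_1−1, n^{k_2}, l_2, …, n^{k_m}, l_m}; λ] = λ′·[{(n−1)^1, l_1, n^{k_2}, l_2, …, n^{k_m}, l_m}; λ], where all brackets are evaluated at the same λ and only the shift of the first block differs. -/

import Mathlib

/-- Strictly decreasing sequences of positive integers of length `L`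
(encoded as functions `ℕ → ℕ` vanishing from `L` on). -/
def DecSeq (L : ℕ) : Type :=
  {n : ℕ → ℕ //
    (∀ i j : ℕ, i < j → j < L → n j < n i) ∧ (∀ i, i < L → 0 < n i) ∧ ∀ i, L ≤ i → n i = 0}

/-- `Lpart m l i = l₁ + ⋯ + l_{i-1}` (0-indexed: the sum of the `l j` for `j < i`),
i.e. the flat index of the first entry of the `i`-th block. -/
def Lpart (m : ℕ) (l : Fin m → ℕ) (i : Fin m) : ℕ :=
  ∑ j : Fin m, if j < i then l j else 0

/-- The bracket series
`[{(n-aᵢ)^{kᵢ}, lᵢ}ᵢ; λ] = Σ_{n₁ > ⋯ > n_{L_m} > 0}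
  ∏ᵢ [ 1/(n_{L_{i-1}+1} - aᵢ)^{kᵢ} ∏_j 1/(n_j - λ) ]`;
the bracket with all shifts `aᵢ = 0` is the generating function `f({kᵢ,lᵢ}ᵢ; λ)`. -/
noncomputable def brak (m : ℕ) (a k l : Fin m → ℕ) (lam : ℂ) : ℂ :=
  ∑' n : DecSeq (∑ j, l j),
    ∏ i : Fin m,
      (1 / ((n.1 (Lpart m l i) : ℂ) - (a i : ℂ)) ^ k i *
        ∏ j ∈ Finset.Ico (Lpart m l i) (Lpart m l i + l i), 1 / ((n.1 j : ℂ) - lam))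

namespace BracketIB


open Finset

lemma decseq_le {L : ℕ} (n : DecSeq L) {i j : ℕ} (hij : i ≤ j) (hj : j < L) :
    n.1 j ≤ n.1 i := by
  rcases eq_or_lt_of_le hij with rfl | h
  · exact le_rfl
  · exact (n.2.1 i j h hj).le

def ncons (h : ℕ) (t : ℕ → ℕ) : ℕ → ℕ := fun j => match j with
  | 0 => h
  | (j+1) => t j

@[simp] lemma ncons_zero (h : ℕ) (t : ℕ → ℕ) : ncons h t 0 = h := rfl
@[simp] lemma ncons_succ (h : ℕ) (t : ℕ → ℕ) (j : ℕ) : ncons h t (j+1) = t j := rfl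

def dcons {L : ℕ} (t : DecSeq L) (h : ℕ) (hh : t.1 0 < h) : DecSeq (L+1) := by
  refine ⟨ncons h t.1, ?_, ?_, ?_⟩
  · intro i j hij hj
    cases j with
    | zero => omega
    | succ j =>
      cases i with
      | zero =>
        exact lt_of_le_of_lt (decseq_le t (Nat.zero_le _) (by omega)) hh
      | succ i => exact t.2.1 i j (by omega) (by omega)
  · intro i hi
    cases i with
    | zero => exact lt_of_le_of_lt (Nat.zero_le _) hh
    | succ i => exact t.2.2.1 i (by omega)
  · intro i hi
    cases i with
    | zero => omega
    | succ i => exact t.2.2.2 i (by omega)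

@[simp] lemma dcons_zero {L : ℕ} (t : DecSeq L) (h : ℕ) (hh : t.1 0 < h) :
    (dcons t h hh).1 0 = h := rfl
@[simp] lemma dcons_succ {L : ℕ} (t : DecSeq L) (h : ℕ) (hh : t.1 0 < h) (j : ℕ) :
    (dcons t h hh).1 (j+1) = t.1 j := rfl

def dtail {L : ℕ} (n : DecSeq (L+1)) : DecSeq L :=
  ⟨fun j => n.1 (j+1), fun i j hij hj => n.2.1 (i+1) (j+1) (by omega) (by omega),
   fun i hi => n.2.2.1 (i+1) (by omega), fun i hi => n.2.2.2 (i+1) (by omega)⟩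

lemma dtail_head_lt {L : ℕ} (n : DecSeq (L+1)) : (dtail n).1 0 < n.1 0 := by
  rcases Nat.eq_zero_or_pos L with rfl | hL
  · show n.1 1 < n.1 0
    have h1 : n.1 1 = 0 := n.2.2.2 1 le_rfl
    rw [h1]
    exact n.2.2.1 0 (by omega)
  · exact n.2.1 0 1 one_pos (by omega)

def decSeqEquiv (L : ℕ) : DecSeq (L+1) ≃ Σ t : DecSeq L, {h : ℕ // t.1 0 < h} where
  toFun n := ⟨dtail n, n.1 0, dtail_head_lt n⟩
  invFun p := dcons p.1 p.2.1 p.2.2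
  left_inv n := Subtype.ext (funext fun j => by cases j <;> rfl)
  right_inv p := rfl


open Finset

lemma Lpart_eq_zero {m : ℕ} (l : Fin m → ℕ) {i : Fin m} (hi : i.1 = 0) :
    Lpart m l i = 0 :=
  Finset.sum_eq_zero fun j _ => if_neg (by simp [Fin.lt_def, hi])

lemma Lpart_erase {m : ℕ} (hm : 1 ≤ m) (l l' : Fin m → ℕ) (hl0 : 1 ≤ l ⟨0, hm⟩)
    (hl' : ∀ i, l' i = if i.1 = 0 then l i - 1 else l i)
    {i : Fin m} (hi : i ≠ ⟨0, hm⟩) : Lpart m l i = Lpart m l' i + 1 := by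
  have hv : i.1 ≠ 0 := fun hv => hi (Fin.ext hv)
  have h0i : (⟨0, hm⟩ : Fin m) < i := by simp [Fin.lt_def]; omega
  unfold Lpart
  rw [← Finset.sum_erase_add _ _ (Finset.mem_univ (⟨0, hm⟩ : Fin m)),
    ← Finset.sum_erase_add _ (fun j => if j < i then l' j else 0)
      (Finset.mem_univ (⟨0, hm⟩ : Fin m))]
  have he : ∑ x ∈ Finset.univ.erase (⟨0, hm⟩ : Fin m), (if x < i then l' x else 0)
      = ∑ x ∈ Finset.univ.erase (⟨0, hm⟩ : Fin m), (if x < i then l x else 0) := by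
    refine Finset.sum_congr rfl fun x hx => ?_
    have hx0 : x.1 ≠ 0 := fun hv => (Finset.mem_erase.mp hx).1 (Fin.ext hv)
    rw [hl' x, if_neg hx0]
  rw [he, if_pos h0i, if_pos h0i, hl' ⟨0, hm⟩, if_pos rfl]
  omega

lemma Lpart_add_le {m : ℕ} (l : Fin m → ℕ) (i : Fin m) :
    Lpart m l i + l i ≤ ∑ j, l j := by
  unfold Lpart
  have h1 : l i = ∑ j : Fin m, if j = i then l j else 0 := by
    rw [Finset.sum_ite_eq' Finset.univ i l, if_pos (Finset.mem_univ i)]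
  rw [h1, ← Finset.sum_add_distrib]
  refine Finset.sum_le_sum fun j _ => ?_
  rcases eq_or_ne j i with rfl | h2
  · simp [lt_irrefl]
  · simp only [if_neg h2, add_zero]
    split <;> simp

lemma Lpart_lt {m : ℕ} (l : Fin m → ℕ) (hl : ∀ i, 1 ≤ l i) (i : Fin m) :
    Lpart m l i < ∑ j, l j :=
  Nat.lt_of_lt_of_le (by have := hl i; omega) (Lpart_add_le l i)

lemma prod_shift {M : Type*} [CommMonoid M] (f : ℕ → M) (a b : ℕ) :
    ∏ j ∈ Finset.Ico (a+1) (b+1), f j = ∏ j ∈ Finset.Ico a b, f (j+1) := by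
  rw [show a + 1 = 1 + a by omega, show b + 1 = 1 + b by omega,
    ← Finset.map_add_left_Ico, Finset.prod_map]
  refine Finset.prod_congr rfl fun j _ => ?_
  congr 1
  simp [addLeftEmbedding_apply]
  omega

lemma prod_blocks {M : Type*} [CommMonoid M] :
    ∀ (m : ℕ) (l : Fin m → ℕ) (f : ℕ → M),
      (∏ i : Fin m, ∏ j ∈ Finset.Ico (Lpart m l i) (Lpart m l i + l i), f j)
        = ∏ j ∈ Finset.range (∑ j, l j), f j := by
  intro m
  induction m with
  | zero => intro l f; simp
  | succ m ih =>
    intro l f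
    rw [Fin.prod_univ_succ, Fin.sum_univ_succ, Finset.prod_range_add]
    have hs : ∀ i : Fin m, Lpart (m+1) l i.succ = l 0 + Lpart m (fun j => l j.succ) i := by
      intro i
      unfold Lpart
      rw [Fin.sum_univ_succ]
      congr 1
      · exact Finset.sum_congr rfl fun j _ => by simp only [Fin.succ_lt_succ_iff]
    congr 1
    · rw [Lpart_eq_zero l (by simp), zero_add, Finset.range_eq_Ico]
    · have key : ∀ i : Fin m,
          (∏ j ∈ Finset.Ico (Lpart (m+1) l i.succ) (Lpart (m+1) l i.succ + l i.succ), f j)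
          = ∏ j ∈ Finset.Ico (Lpart m (fun j => l j.succ) i)
              (Lpart m (fun j => l j.succ) i + l i.succ), f (l 0 + j) := by
        intro i
        rw [hs i, add_assoc, ← Finset.map_add_left_Ico, Finset.prod_map]
        exact Finset.prod_congr rfl fun j _ => by congr 1
      rw [Finset.prod_congr rfl fun i _ => key i]
      exact ih (fun j => l j.succ) (fun j => f (l 0 + j))


open Finset Filter

def subEquiv (N : ℕ) : ℕ ≃ {h : ℕ // N < h} where
  toFun i := ⟨N + 1 + i, by omega⟩
  invFun x := x.1 - (N + 1)
  left_inv i := by simp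
  right_inv x := Subtype.ext (by have := x.2; simp; omega)

lemma hasSum_tele_real (N : ℕ) (hN : 1 ≤ N) :
    HasSum (fun x : {h : ℕ // N < h} => ((x.1 : ℝ) - 1)⁻¹ - (x.1 : ℝ)⁻¹) ((N : ℝ)⁻¹) := by
  rw [← (subEquiv N).hasSum_iff]
  set d : ℕ → ℝ := fun i => ((N + i : ℕ) : ℝ)⁻¹ with hd
  have hfe : ((fun x : {h : ℕ // N < h} => ((x.1 : ℝ) - 1)⁻¹ - (x.1 : ℝ)⁻¹) ∘ (subEquiv N))
      = fun i : ℕ => d i - d (i + 1) := by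
    funext i
    show ((((N+1+i : ℕ) : ℝ)) - 1)⁻¹ - (((N+1+i : ℕ) : ℝ))⁻¹ = d i - d (i+1)
    have e1 : ((N+1+i : ℕ) : ℝ) - 1 = ((N + i : ℕ) : ℝ) := by push_cast; ring
    have e2 : ((N+1+i : ℕ) : ℝ) = ((N + (i+1) : ℕ) : ℝ) := by push_cast; ring
    rw [e1, hd]
    simp only []
    rw [e2]
  rw [hfe]
  have hpos : ∀ i : ℕ, (0 : ℝ) < ((N + i : ℕ) : ℝ) := by
    intro i
    exact_mod_cast (by omega : 0 < N + i)
  have hmono : ∀ i : ℕ, d (i+1) ≤ d i := by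
    intro i
    apply inv_anti₀ (hpos i)
    exact_mod_cast (by omega : N + i ≤ N + (i+1))
  rw [hasSum_iff_tendsto_nat_of_nonneg (fun i => sub_nonneg.mpr (hmono i))]
  have hps : ∀ n : ℕ, ∑ i ∈ Finset.range n, (d i - d (i+1)) = d 0 - d n :=
    fun n => Finset.sum_range_sub' d n
  simp only [hps]
  have hd0 : d 0 = (N : ℝ)⁻¹ := by simp [hd]
  have hlim : Tendsto d atTop (nhds 0) := by
    apply Tendsto.inv_tendsto_atTop
    apply tendsto_natCast_atTop_atTop.comp
    exact tendsto_atTop_mono (fun i => by omega : ∀ i : ℕ, i ≤ N + i) tendsto_id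
  rw [hd0]
  simpa using (tendsto_const_nhds (x := (N:ℝ)⁻¹)).sub hlim

lemma hasSum_tele_complex (N : ℕ) (hN : 1 ≤ N) :
    HasSum (fun x : {h : ℕ // N < h} => (1 / ((x.1 : ℂ) - 1) - 1 / (x.1 : ℂ))) (1 / (N : ℂ)) := by
  have h := (hasSum_tele_real N hN).map Complex.ofRealHom Complex.continuous_ofReal
  have hfe : (⇑Complex.ofRealHom ∘ fun x : {h : ℕ // N < h} => ((x.1 : ℝ) - 1)⁻¹ - (x.1 : ℝ)⁻¹)
      = fun x : {h : ℕ // N < h} => (1 / ((x.1 : ℂ) - 1) - 1 / (x.1 : ℂ)) := by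
    funext x
    show (Complex.ofRealHom (((x.1 : ℝ) - 1)⁻¹ - (x.1 : ℝ)⁻¹)) = _
    rw [Complex.ofRealHom_eq_coe]
    push_cast
    rw [one_div, one_div]
  rw [hfe] at h
  have hv : (Complex.ofRealHom ((N : ℝ)⁻¹)) = 1 / (N : ℂ) := by
    rw [Complex.ofRealHom_eq_coe]
    push_cast
    rw [one_div]
  rwa [hv] at h

lemma sq_base : Summable (fun n : ℕ => (n : ℝ)⁻¹ * (n : ℝ)⁻¹) := by
  have h := Real.summable_one_div_nat_pow.mpr (by norm_num : 1 < 2)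
  refine h.congr fun n => ?_
  rw [one_div, pow_two, mul_inv]

lemma sq_sub_summable (N : ℕ) :
    Summable (fun x : {h : ℕ // N < h} => (x.1 : ℝ)⁻¹ * (x.1 : ℝ)⁻¹) :=
  sq_base.subtype {h | N < h}

lemma sq_tsum_le (N : ℕ) (hN : 1 ≤ N) :
    ∑' x : {h : ℕ // N < h}, (x.1 : ℝ)⁻¹ * (x.1 : ℝ)⁻¹ ≤ (N : ℝ)⁻¹ := by
  have ht := hasSum_tele_real N hN
  have hle : ∀ x : {h : ℕ // N < h},
      (x.1 : ℝ)⁻¹ * (x.1 : ℝ)⁻¹ ≤ ((x.1 : ℝ) - 1)⁻¹ - (x.1 : ℝ)⁻¹ := by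
    intro x
    have h2 : 2 ≤ x.1 := by have := x.2; omega
    have hr : (2 : ℝ) ≤ (x.1 : ℝ) := by exact_mod_cast h2
    have h1 : (0 : ℝ) < (x.1 : ℝ) - 1 := by linarith
    have h0 : (0 : ℝ) < (x.1 : ℝ) := by linarith
    have key : ((x.1 : ℝ) - 1)⁻¹ - (x.1 : ℝ)⁻¹ = (((x.1 : ℝ) - 1) * (x.1 : ℝ))⁻¹ := by
      field_simp
      ring
    rw [key, ← mul_inv]
    apply inv_anti₀ (by positivity)
    nlinarith
  calc ∑' x : {h : ℕ // N < h}, (x.1 : ℝ)⁻¹ * (x.1 : ℝ)⁻¹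
      ≤ ∑' x : {h : ℕ // N < h}, (((x.1 : ℝ) - 1)⁻¹ - (x.1 : ℝ)⁻¹) :=
        Summable.tsum_le_tsum hle (sq_sub_summable N) ht.summable
    _ = (N : ℝ)⁻¹ := ht.tsum_eq


end BracketIB

namespace BracketIB
open Finset Filter

noncomputable def GFun (L : ℕ) (n : DecSeq L) : ℝ :=
  (n.1 0 : ℝ)⁻¹ * ∏ j ∈ Finset.range L, (n.1 j : ℝ)⁻¹

lemma GFun_nonneg {L : ℕ} (n : DecSeq L) : 0 ≤ GFun L n :=
  mul_nonneg (inv_nonneg.2 (Nat.cast_nonneg _))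
    (Finset.prod_nonneg fun j _ => inv_nonneg.2 (Nat.cast_nonneg _))

instance : Subsingleton (DecSeq 0) :=
  ⟨fun a b => Subtype.ext (funext fun i => by
    rw [a.2.2.2 i (Nat.zero_le _), b.2.2.2 i (Nat.zero_le _)])⟩

lemma GFun_cons {L : ℕ} (t : DecSeq L) (h : ℕ) (hh : t.1 0 < h) :
    GFun (L+1) (dcons t h hh) = ((h : ℝ)⁻¹ * (h : ℝ)⁻¹) * ∏ j ∈ Finset.range L, (t.1 j : ℝ)⁻¹ := by
  unfold GFun
  rw [Finset.prod_range_succ']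
  simp only [dcons_zero, dcons_succ]
  ring

set_option maxHeartbeats 1000000 in
lemma summable_GFun : ∀ L, Summable (GFun L) := by
  intro L
  induction L with
  | zero => exact Summable.of_finite
  | succ L ih =>
    rw [← (decSeqEquiv L).symm.summable_iff]
    have hfe : (GFun (L+1)) ∘ ⇑(decSeqEquiv L).symm
        = fun p : Σ t : DecSeq L, {h : ℕ // t.1 0 < h} =>
            ((p.2.1 : ℝ)⁻¹ * (p.2.1 : ℝ)⁻¹) * ∏ j ∈ Finset.range L, (p.1.1 j : ℝ)⁻¹ := by
      funext p
      rcases p with ⟨t, x⟩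
      exact GFun_cons t x.1 x.2
    rw [hfe]
    refine (summable_sigma_of_nonneg fun p => by positivity).mpr ⟨fun t => ?_, ?_⟩
    · show Summable (fun y : {h : ℕ // t.1 0 < h} =>
        ((y.1 : ℝ)⁻¹ * (y.1 : ℝ)⁻¹) * ∏ j ∈ Finset.range L, (t.1 j : ℝ)⁻¹)
      exact (sq_sub_summable (t.1 0)).mul_right _
    · show Summable (fun t : DecSeq L => ∑' y : {h : ℕ // t.1 0 < h},
        ((y.1 : ℝ)⁻¹ * (y.1 : ℝ)⁻¹) * ∏ j ∈ Finset.range L, (t.1 j : ℝ)⁻¹)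
      rcases Nat.eq_zero_or_pos L with rfl | hL
      · exact Summable.of_finite
      · refine Summable.of_nonneg_of_le (fun t => tsum_nonneg fun x => by positivity)
          (fun t => ?_) ih
        rw [tsum_mul_right]
        have h1 : 1 ≤ t.1 0 := t.2.2.1 0 hL
        calc (∑' x : {h : ℕ // t.1 0 < h}, (x.1 : ℝ)⁻¹ * (x.1 : ℝ)⁻¹)
              * (∏ j ∈ Finset.range L, (t.1 j : ℝ)⁻¹)
            ≤ (t.1 0 : ℝ)⁻¹ * ∏ j ∈ Finset.range L, (t.1 j : ℝ)⁻¹ := by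
              apply mul_le_mul_of_nonneg_right (sq_tsum_le _ h1)
              exact Finset.prod_nonneg fun j _ => inv_nonneg.2 (Nat.cast_nonneg _)
          _ = GFun L t := rfl

noncomputable def termF (m : ℕ) (a k l : Fin m → ℕ) (lam : ℂ) (L : ℕ) (n : DecSeq L) : ℂ :=
  ∏ i : Fin m,
    (1 / ((n.1 (Lpart m l i) : ℂ) - (a i : ℂ)) ^ k i *
      ∏ j ∈ Finset.Ico (Lpart m l i) (Lpart m l i + l i), 1 / ((n.1 j : ℂ) - lam))

lemma brak_eq (m : ℕ) (a k l : Fin m → ℕ) (lam : ℂ) {L : ℕ} (hL : (∑ j, l j) = L) :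
    brak m a k l lam = ∑' n : DecSeq L, termF m a k l lam L n := by
  subst hL; rfl

lemma exists_bound (lam : ℂ) (hlam : ∀ n : ℕ, 0 < n → lam ≠ (n : ℂ)) :
    ∃ c : ℝ, 0 ≤ c ∧ ∀ n : ℕ, 1 ≤ n → ‖1 / ((n : ℂ) - lam)‖ ≤ c * (n : ℝ)⁻¹ := by
  set B := Nat.ceil (2 * ‖lam‖) with hB
  set S : ℝ := ∑ n ∈ Finset.Icc 1 B, (n : ℝ) * ‖(n : ℂ) - lam‖⁻¹ with hS
  have hS0 : 0 ≤ S := Finset.sum_nonneg fun i _ => by positivity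
  refine ⟨2 + S, by positivity, ?_⟩
  intro n hn
  have hne : (n : ℂ) - lam ≠ 0 := sub_ne_zero.mpr fun hfoo => (hlam n hn) hfoo.symm
  have hpos : 0 < ‖(n : ℂ) - lam‖ := norm_pos_iff.mpr hne
  have hn0 : (0 : ℝ) < (n : ℝ) := by exact_mod_cast hn
  have hc : (n : ℝ) ≤ (2 + S) * ‖(n : ℂ) - lam‖ := by
    by_cases hcase : n ≤ B
    · have hmem : n ∈ Finset.Icc 1 B := Finset.mem_Icc.mpr ⟨hn, hcase⟩
      have hterm : (n : ℝ) * ‖(n : ℂ) - lam‖⁻¹ ≤ S :=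
        Finset.single_le_sum (f := fun i : ℕ => (i : ℝ) * ‖(i : ℂ) - lam‖⁻¹)
          (fun i _ => by positivity) hmem
      have h2 : (n : ℝ) * ‖(n : ℂ) - lam‖⁻¹ ≤ 2 + S := by linarith
      calc (n : ℝ) = ((n : ℝ) * ‖(n : ℂ) - lam‖⁻¹) * ‖(n : ℂ) - lam‖ :=
            (inv_mul_cancel_right₀ hpos.ne' _).symm
        _ ≤ (2 + S) * ‖(n : ℂ) - lam‖ := mul_le_mul_of_nonneg_right h2 hpos.le
    · have hBn : (B : ℝ) < (n : ℝ) := by exact_mod_cast Nat.lt_of_not_le fun h => hcase h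
      have hge : 2 * ‖lam‖ ≤ (n : ℝ) := le_trans (Nat.le_ceil _) hBn.le
      have h1 : ‖(n : ℂ)‖ - ‖lam‖ ≤ ‖(n : ℂ) - lam‖ := norm_sub_norm_le _ _
      rw [Complex.norm_natCast] at h1
      have hlow : (n : ℝ) / 2 ≤ ‖(n : ℂ) - lam‖ := by linarith
      calc (n : ℝ) = 2 * ((n : ℝ) / 2) := by ring
        _ ≤ 2 * ‖(n : ℂ) - lam‖ := by linarith
        _ ≤ (2 + S) * ‖(n : ℂ) - lam‖ := mul_le_mul_of_nonneg_right (by linarith) hpos.le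
  rw [one_div, norm_inv]
  have hmul : (n : ℝ) * ‖(n : ℂ) - lam‖⁻¹ ≤ 2 + S := by
    rw [mul_inv_le_iff₀ hpos]
    exact hc
  calc ‖(n : ℂ) - lam‖⁻¹ = (n : ℝ)⁻¹ * ((n : ℝ) * ‖(n : ℂ) - lam‖⁻¹) := by
        rw [← mul_assoc, inv_mul_cancel₀ hn0.ne', one_mul]
    _ ≤ (n : ℝ)⁻¹ * (2 + S) := mul_le_mul_of_nonneg_left hmul (inv_nonneg.2 hn0.le)
    _ = (2 + S) * (n : ℝ)⁻¹ := mul_comm _ _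

lemma inv_sub_one_le (n : ℕ) : ((n : ℝ) - 1)⁻¹ ≤ 2 * (n : ℝ)⁻¹ := by
  rcases n with _ | _ | n
  · norm_num
  · norm_num
  · have h2 : (2 : ℝ) ≤ ((n + 2 : ℕ) : ℝ) := by exact_mod_cast (by omega : 2 ≤ n + 2)
    have h1 : (0 : ℝ) < ((n + 2 : ℕ) : ℝ) - 1 := by linarith
    have h0 : (0 : ℝ) < ((n + 2 : ℕ) : ℝ) := by linarith
    rw [inv_eq_one_div, show (2 : ℝ) * ((n + 2 : ℕ) : ℝ)⁻¹ = 2 / ((n + 2 : ℕ) : ℝ) by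
      rw [div_eq_mul_inv]]
    rw [div_le_div_iff₀ h1 h0]
    linarith

lemma head_bound (a0 n : ℕ) (ha : a0 ≤ 1) (hn : 1 ≤ n) :
    ‖1 / ((n : ℂ) - (a0 : ℂ))‖ ≤ 2 * (n : ℝ)⁻¹ := by
  have hn0 : (0 : ℝ) < (n : ℝ) := by exact_mod_cast hn
  interval_cases a0
  · rw [Nat.cast_zero, sub_zero, one_div, norm_inv, Complex.norm_natCast]
    have : (0:ℝ) ≤ (n : ℝ)⁻¹ := by positivity
    linarith
  · have he : (n : ℂ) - ((1 : ℕ) : ℂ) = Complex.ofReal ((n : ℝ) - 1) := by push_cast; ring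
    rw [one_div, he, norm_inv, Complex.norm_real, Real.norm_eq_abs, abs_of_nonneg (by
      have : (1:ℝ) ≤ (n:ℝ) := by exact_mod_cast hn
      linarith : (0:ℝ) ≤ (n:ℝ) - 1)]
    exact inv_sub_one_le n

set_option maxHeartbeats 1000000 in
lemma summable_term (m : ℕ) (hm : 1 ≤ m) (k l a : Fin m → ℕ)
    (hl : ∀ i, 1 ≤ l i) (hk0 : k ⟨0, hm⟩ = 1)
    (ha0 : a ⟨0, hm⟩ ≤ 1) (ha : ∀ i, i ≠ ⟨0, hm⟩ → a i = 0)
    (lam : ℂ) (hlam : ∀ n : ℕ, 0 < n → lam ≠ (n : ℂ)) {L : ℕ} (hL : (∑ j, l j) = L) :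
    Summable (termF m a k l lam L) := by
  subst hL
  obtain ⟨c, hc0, hcb⟩ := exists_bound lam hlam
  apply Summable.of_norm_bounded (g := fun n => (2 * c ^ (∑ j, l j)) * GFun _ n)
    ((summable_GFun _).mul_left _)
  intro n
  have hLpos : 0 < ∑ j, l j :=
    lt_of_lt_of_le (hl ⟨0, hm⟩)
      (Finset.single_le_sum (fun i _ => Nat.zero_le _) (Finset.mem_univ _))
  have hpos : ∀ j, j < (∑ j, l j) → 1 ≤ n.1 j := fun j hj => n.2.2.1 j hj
  unfold termF
  rw [norm_prod]
  have hpt : ∀ i ∈ (Finset.univ : Finset (Fin m)),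
      ‖1 / ((n.1 (Lpart m l i) : ℂ) - (a i : ℂ)) ^ k i *
        ∏ j ∈ Finset.Ico (Lpart m l i) (Lpart m l i + l i), 1 / ((n.1 j : ℂ) - lam)‖
      ≤ (if i = ⟨0, hm⟩ then 2 * ((n.1 0 : ℝ))⁻¹ else 1) *
          ∏ j ∈ Finset.Ico (Lpart m l i) (Lpart m l i + l i), (c * (n.1 j : ℝ)⁻¹) := by
    intro i _
    rw [norm_mul]
    have hprodle : ‖∏ j ∈ Finset.Ico (Lpart m l i) (Lpart m l i + l i),
        1 / ((n.1 j : ℂ) - lam)‖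
        ≤ ∏ j ∈ Finset.Ico (Lpart m l i) (Lpart m l i + l i), (c * (n.1 j : ℝ)⁻¹) := by
      rw [norm_prod]
      refine Finset.prod_le_prod (fun j _ => norm_nonneg _) fun j hj => ?_
      have hjL : j < ∑ j, l j :=
        lt_of_lt_of_le (Finset.mem_Ico.mp hj).2 (Lpart_add_le l i)
      exact hcb (n.1 j) (hpos j hjL)
    by_cases hi : i = ⟨0, hm⟩
    · subst hi
      rw [if_pos rfl]
      refine mul_le_mul ?_ hprodle (norm_nonneg _) (by positivity)
      rw [Lpart_eq_zero l rfl, hk0, pow_one]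
      exact head_bound _ _ ha0 (hpos 0 hLpos)
    · rw [if_neg hi]
      refine mul_le_mul ?_ hprodle (norm_nonneg _) (by norm_num)
      rw [ha i hi, Nat.cast_zero, sub_zero, one_div, norm_inv, norm_pow,
        Complex.norm_natCast]
      have h1 : (1 : ℝ) ≤ (n.1 (Lpart m l i) : ℝ) := by
        exact_mod_cast hpos _ (Lpart_lt l hl i)
      have h2 : (1 : ℝ) ≤ (n.1 (Lpart m l i) : ℝ) ^ k i := one_le_pow₀ h1
      rw [inv_le_one_iff₀]
      right
      exact h2
  calc (∏ i : Fin m, ‖1 / ((n.1 (Lpart m l i) : ℂ) - (a i : ℂ)) ^ k i *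
          ∏ j ∈ Finset.Ico (Lpart m l i) (Lpart m l i + l i), 1 / ((n.1 j : ℂ) - lam)‖)
      ≤ ∏ i : Fin m, ((if i = ⟨0, hm⟩ then 2 * ((n.1 0 : ℝ))⁻¹ else 1) *
          ∏ j ∈ Finset.Ico (Lpart m l i) (Lpart m l i + l i), (c * (n.1 j : ℝ)⁻¹)) :=
        Finset.prod_le_prod (fun i _ => norm_nonneg _) hpt
    _ = (2 * c ^ (∑ j, l j)) * GFun _ n := by
        rw [Finset.prod_mul_distrib,
          Finset.prod_ite_eq' Finset.univ (⟨0, hm⟩ : Fin m) (fun _ => 2 * ((n.1 0 : ℝ))⁻¹),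
          if_pos (Finset.mem_univ _), prod_blocks m l (fun j => c * ((n.1 j : ℝ))⁻¹),
          Finset.prod_mul_distrib, Finset.prod_const, Finset.card_range]
        unfold GFun
        ring

lemma termF_cons (m : ℕ) (hm : 1 ≤ m) (k l l' a : Fin m → ℕ)
    (hl : ∀ i, 1 ≤ l i) (hl' : ∀ i, l' i = if i.1 = 0 then l i - 1 else l i)
    (ha : ∀ i, i ≠ ⟨0, hm⟩ → a i = 0) (lam : ℂ)
    {Lm1 : ℕ} (t : DecSeq Lm1) (h : ℕ) (hh : t.1 0 < h) :
    termF m a k l lam (Lm1+1) (dcons t h hh)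
      = (1 / ((h : ℂ) - (a ⟨0, hm⟩ : ℂ)) ^ (k ⟨0, hm⟩) * (1 / ((h : ℂ) - lam))) *
        ((∏ j ∈ Finset.Ico 0 (l ⟨0, hm⟩ - 1), 1 / ((t.1 j : ℂ) - lam)) *
          ∏ i ∈ Finset.univ.erase (⟨0, hm⟩ : Fin m),
            (1 / ((t.1 (Lpart m l' i) : ℂ)) ^ (k i) *
              ∏ j ∈ Finset.Ico (Lpart m l' i) (Lpart m l' i + l' i),
                1 / ((t.1 j : ℂ) - lam))) := by
  unfold termF
  rw [← Finset.mul_prod_erase Finset.univ _ (Finset.mem_univ (⟨0, hm⟩ : Fin m))]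
  have h0 : Lpart m l ⟨0, hm⟩ = 0 := Lpart_eq_zero l rfl
  have hl0 : 1 ≤ l ⟨0, hm⟩ := hl _
  have hfront : (1 / (((dcons t h hh).1 (Lpart m l ⟨0, hm⟩) : ℂ) - (a ⟨0, hm⟩ : ℂ)) ^ (k ⟨0, hm⟩) *
      ∏ j ∈ Finset.Ico (Lpart m l ⟨0, hm⟩) (Lpart m l ⟨0, hm⟩ + l ⟨0, hm⟩),
        1 / (((dcons t h hh).1 j : ℂ) - lam))
      = (1 / ((h : ℂ) - (a ⟨0, hm⟩ : ℂ)) ^ (k ⟨0, hm⟩) * (1 / ((h : ℂ) - lam))) *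
        (∏ j ∈ Finset.Ico 0 (l ⟨0, hm⟩ - 1), 1 / ((t.1 j : ℂ) - lam)) := by
    rw [h0, zero_add]
    rw [Finset.prod_eq_prod_Ico_succ_bot hl0]
    have hset : Finset.Ico 1 (l ⟨0, hm⟩) = Finset.Ico (0 + 1) ((l ⟨0, hm⟩ - 1) + 1) := by
      congr 1
      omega
    rw [hset, prod_shift]
    have hrest : (∏ j ∈ Finset.Ico 0 (l ⟨0, hm⟩ - 1),
        1 / (((dcons t h hh).1 (j + 1) : ℂ) - lam))
        = ∏ j ∈ Finset.Ico 0 (l ⟨0, hm⟩ - 1), 1 / ((t.1 j : ℂ) - lam) :=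
      Finset.prod_congr rfl fun j _ => rfl
    rw [hrest]
    show (1 / (((h : ℕ) : ℂ) - (a ⟨0, hm⟩ : ℂ)) ^ (k ⟨0, hm⟩)) *
        ((1 / (((h : ℕ) : ℂ) - lam)) * _) = _
    ring
  rw [hfront]
  have herase : (∏ i ∈ Finset.univ.erase (⟨0, hm⟩ : Fin m),
      (1 / (((dcons t h hh).1 (Lpart m l i) : ℂ) - (a i : ℂ)) ^ k i *
        ∏ j ∈ Finset.Ico (Lpart m l i) (Lpart m l i + l i),
          1 / (((dcons t h hh).1 j : ℂ) - lam)))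
      = ∏ i ∈ Finset.univ.erase (⟨0, hm⟩ : Fin m),
          (1 / ((t.1 (Lpart m l' i) : ℂ)) ^ (k i) *
            ∏ j ∈ Finset.Ico (Lpart m l' i) (Lpart m l' i + l' i),
              1 / ((t.1 j : ℂ) - lam)) := by
    refine Finset.prod_congr rfl fun i hi => ?_
    have hine : i ≠ ⟨0, hm⟩ := (Finset.mem_erase.mp hi).1
    have hv : i.1 ≠ 0 := fun hv => hine (Fin.ext hv)
    have hP : Lpart m l i = Lpart m l' i + 1 := Lpart_erase hm l l' hl0 hl' hine
    have hli : l' i = l i := by rw [hl' i, if_neg hv]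
    congr 1
    · rw [hP, ha i hine, Nat.cast_zero, sub_zero]
      rfl
    · rw [hP, ← hli]
      have hset2 : Finset.Ico (Lpart m l' i + 1) (Lpart m l' i + 1 + l' i)
          = Finset.Ico (Lpart m l' i + 1) ((Lpart m l' i + l' i) + 1) := by
        congr 1
        omega
      rw [hset2, prod_shift]
      exact Finset.prod_congr rfl fun j _ => rfl
  rw [herase]
  ring

lemma termF_split (m : ℕ) (hm : 1 ≤ m) (k l' : Fin m → ℕ) (lam : ℂ)
    {Lm1 : ℕ} (t : DecSeq Lm1) :
    termF m (fun _ => 0) k l' lam Lm1 t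
      = (1 / ((t.1 0 : ℂ)) ^ (k ⟨0, hm⟩) *
          ∏ j ∈ Finset.Ico 0 (l' ⟨0, hm⟩), 1 / ((t.1 j : ℂ) - lam)) *
        ∏ i ∈ Finset.univ.erase (⟨0, hm⟩ : Fin m),
          (1 / ((t.1 (Lpart m l' i) : ℂ)) ^ (k i) *
            ∏ j ∈ Finset.Ico (Lpart m l' i) (Lpart m l' i + l' i),
              1 / ((t.1 j : ℂ) - lam)) := by
  unfold termF
  rw [← Finset.mul_prod_erase Finset.univ _ (Finset.mem_univ (⟨0, hm⟩ : Fin m))]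
  have h0 : Lpart m l' ⟨0, hm⟩ = 0 := Lpart_eq_zero l' rfl
  congr 1
  · rw [h0, zero_add, Nat.cast_zero, sub_zero]
  · refine Finset.prod_congr rfl fun i hi => ?_
    rw [Nat.cast_zero, sub_zero]

end BracketIB

open BracketIB in
set_option maxHeartbeats 2000000 in
/-- Lemma (i)(b): for `k₁ = 1` (and not `m = 1, l₁ = 1`),
`λ[{n^1,l₁,…};λ] - [{n^1,l₁-1,…};λ] = λ'[{(n-1)^1,l₁,…};λ]`. -/
theorem bracket_lemma_ib (m : ℕ) (hm : 1 ≤ m) (k l : Fin m → ℕ)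
    (hk : ∀ i, 1 ≤ k i) (hl : ∀ i, 1 ≤ l i) (hk0 : k ⟨0, hm⟩ = 1)
    (hnot : ¬(m = 1 ∧ l ⟨0, hm⟩ = 1))
    (lam : ℂ) (hlam : ∀ n : ℕ, 0 < n → lam ≠ (n : ℂ)) :
    lam * brak m (fun _ => 0) k l lam
        - brak m (fun _ => 0) k (fun i => if i.1 = 0 then l i - 1 else l i) lam
      = (lam - 1) * brak m (fun i => if i.1 = 0 then 1 else 0) k l lam := by
  classical
  set l' : Fin m → ℕ := fun i => if i.1 = 0 then l i - 1 else l i with hl'def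
  have hl'2 : ∀ i, l' i = if i.1 = 0 then l i - 1 else l i := fun i => rfl
  have hl'i0 : l' ⟨0, hm⟩ = l ⟨0, hm⟩ - 1 := by rw [hl'2, if_pos rfl]
  have hsum_succ : (∑ j, l' j) + 1 = ∑ j, l j := by
    rw [← Finset.sum_erase_add _ l' (Finset.mem_univ (⟨0, hm⟩ : Fin m)),
      ← Finset.sum_erase_add _ l (Finset.mem_univ (⟨0, hm⟩ : Fin m))]
    have he : ∑ x ∈ Finset.univ.erase (⟨0, hm⟩ : Fin m), l' x
        = ∑ x ∈ Finset.univ.erase (⟨0, hm⟩ : Fin m), l x := by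
      refine Finset.sum_congr rfl fun x hx => ?_
      have hv : x.1 ≠ 0 := fun hv => (Finset.mem_erase.mp hx).1 (Fin.ext hv)
      rw [hl'2, if_neg hv]
    rw [he, hl'i0]
    have := hl ⟨0, hm⟩
    omega
  have hL2 : 2 ≤ ∑ j, l j := by
    by_cases hm1 : m = 1
    · subst hm1
      have h01 : (∑ j : Fin 1, l j) = l ⟨0, hm⟩ := by
        rw [Fin.sum_univ_one]
        congr 1
      have hne : l ⟨0, hm⟩ ≠ 1 := fun hh => hnot ⟨rfl, hh⟩
      have := hl ⟨0, hm⟩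
      omega
    · have hm2 : 2 ≤ m := by omega
      set i1 : Fin m := ⟨1, by omega⟩ with hi1
      have hne : (⟨0, hm⟩ : Fin m) ≠ i1 := Fin.ne_of_val_ne Nat.zero_ne_one
      have hsub := Finset.sum_le_sum_of_subset
        (Finset.subset_univ ({⟨0, hm⟩, i1} : Finset (Fin m))) (f := l)
      rw [Finset.sum_pair hne] at hsub
      have := hl ⟨0, hm⟩
      have := hl i1
      omega
  set Lm1 : ℕ := (∑ j, l j) - 1 with hLm1def
  have hLsucc : (∑ j, l j) = Lm1 + 1 := by omega
  have hLm1 : 1 ≤ Lm1 := by omega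
  have hsum' : (∑ j, l' j) = Lm1 := by omega
  rw [brak_eq m (fun _ => 0) k l lam hLsucc,
    brak_eq m (fun i => if i.1 = 0 then 1 else 0) k l lam hLsucc,
    brak_eq m (fun _ => 0) k l' lam hsum']
  have hsA : Summable (termF m (fun _ => 0) k l lam (Lm1+1)) :=
    summable_term m hm k l (fun _ => 0) hl hk0 (by norm_num) (fun i _ => rfl) lam hlam hLsucc
  have hsC : Summable (termF m (fun i => if i.1 = 0 then 1 else 0) k l lam (Lm1+1)) :=
    summable_term m hm k l (fun i => if i.1 = 0 then 1 else 0) hl hk0 (by norm_num)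
      (fun i hi => if_neg (fun hv => hi (Fin.ext hv))) lam hlam hLsucc
  have hg : Summable (fun n : DecSeq (Lm1+1) =>
      lam * termF m (fun _ => 0) k l lam (Lm1+1) n
        - (lam - 1) * termF m (fun i => if i.1 = 0 then 1 else 0) k l lam (Lm1+1) n) :=
    (hsA.mul_left lam).sub (hsC.mul_left (lam - 1))
  have key : (∑' n : DecSeq (Lm1+1),
      (lam * termF m (fun _ => 0) k l lam (Lm1+1) n
        - (lam - 1) * termF m (fun i => if i.1 = 0 then 1 else 0) k l lam (Lm1+1) n))
      = ∑' t : DecSeq Lm1, termF m (fun _ => 0) k l' lam Lm1 t := by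
    have hg2 : Summable ((fun n : DecSeq (Lm1+1) =>
        lam * termF m (fun _ => 0) k l lam (Lm1+1) n
          - (lam - 1) * termF m (fun i => if i.1 = 0 then 1 else 0) k l lam (Lm1+1) n)
        ∘ ⇑(decSeqEquiv Lm1).symm) := ((decSeqEquiv Lm1).symm.summable_iff).mpr hg
    calc (∑' n : DecSeq (Lm1+1),
        (lam * termF m (fun _ => 0) k l lam (Lm1+1) n
          - (lam - 1) * termF m (fun i => if i.1 = 0 then 1 else 0) k l lam (Lm1+1) n))
        = ∑' p : (Σ t : DecSeq Lm1, {h : ℕ // t.1 0 < h}),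
            (lam * termF m (fun _ => 0) k l lam (Lm1+1) ((decSeqEquiv Lm1).symm p)
              - (lam - 1) * termF m (fun i => if i.1 = 0 then 1 else 0) k l lam (Lm1+1)
                  ((decSeqEquiv Lm1).symm p)) := ((decSeqEquiv Lm1).symm.tsum_eq _).symm
      _ = ∑' (t : DecSeq Lm1) (x : {h : ℕ // t.1 0 < h}),
            (lam * termF m (fun _ => 0) k l lam (Lm1+1) ((decSeqEquiv Lm1).symm ⟨t, x⟩)
              - (lam - 1) * termF m (fun i => if i.1 = 0 then 1 else 0) k l lam (Lm1+1)
                  ((decSeqEquiv Lm1).symm ⟨t, x⟩)) := Summable.tsum_sigma hg2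
      _ = ∑' t : DecSeq Lm1, termF m (fun _ => 0) k l' lam Lm1 t := by
          refine tsum_congr fun t => ?_
          have ht1 : 1 ≤ t.1 0 := t.2.2.1 0 hLm1
          have ht0c : ((t.1 0 : ℕ) : ℂ) ≠ 0 := Nat.cast_ne_zero.mpr (by omega)
          have hbx : ∀ x : {h : ℕ // t.1 0 < h},
              (lam * termF m (fun _ => 0) k l lam (Lm1+1) ((decSeqEquiv Lm1).symm ⟨t, x⟩)
                - (lam - 1) * termF m (fun i => if i.1 = 0 then 1 else 0) k l lam (Lm1+1)
                    ((decSeqEquiv Lm1).symm ⟨t, x⟩))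
              = (1 / ((x.1 : ℂ) - 1) - 1 / (x.1 : ℂ))
                  * ((t.1 0 : ℂ) * termF m (fun _ => 0) k l' lam Lm1 t) := by
            intro x
            show (lam * termF m (fun _ => 0) k l lam (Lm1+1) (dcons t x.1 x.2)
                - (lam - 1) * termF m (fun i => if i.1 = 0 then 1 else 0) k l lam (Lm1+1)
                    (dcons t x.1 x.2)) = _
            rw [termF_cons m hm k l l' (fun _ => 0) hl hl'2 (fun i _ => rfl) lam t x.1 x.2,
              termF_cons m hm k l l' (fun i => if i.1 = 0 then 1 else 0) hl hl'2
                (fun i hi => if_neg (fun hv => hi (Fin.ext hv))) lam t x.1 x.2,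
              termF_split m hm k l' lam t, hl'i0]
            simp only [hk0, pow_one, Nat.cast_zero, sub_zero, Nat.cast_one,
              Nat.cast_ite, if_pos rfl, if_true]
            have hx2 : 2 ≤ x.1 := by have := x.2; omega
            generalize (∏ j ∈ Finset.Ico 0 (l ⟨0, hm⟩ - 1), 1 / ((t.1 j : ℂ) - lam)) = K
            generalize (∏ i ∈ Finset.univ.erase (⟨0, hm⟩ : Fin m),
              (1 / ((t.1 (Lpart m l' i) : ℂ)) ^ (k i) *
                ∏ j ∈ Finset.Ico (Lpart m l' i) (Lpart m l' i + l' i),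
                  1 / ((t.1 j : ℂ) - lam))) = R
            have hx0 : ((x.1 : ℕ) : ℂ) ≠ 0 := Nat.cast_ne_zero.mpr (by omega)
            have hx1 : ((x.1 : ℕ) : ℂ) - 1 ≠ 0 := sub_ne_zero.mpr (by
              exact_mod_cast (by omega : x.1 ≠ 1))
            have hxl : ((x.1 : ℕ) : ℂ) - lam ≠ 0 :=
              sub_ne_zero.mpr fun he => hlam x.1 (by omega) he.symm
            field_simp
            ring
          calc (∑' x : {h : ℕ // t.1 0 < h},
              (lam * termF m (fun _ => 0) k l lam (Lm1+1) ((decSeqEquiv Lm1).symm ⟨t, x⟩)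
                - (lam - 1) * termF m (fun i => if i.1 = 0 then 1 else 0) k l lam (Lm1+1)
                    ((decSeqEquiv Lm1).symm ⟨t, x⟩)))
              = ∑' x : {h : ℕ // t.1 0 < h}, (1 / ((x.1 : ℂ) - 1) - 1 / (x.1 : ℂ))
                  * ((t.1 0 : ℂ) * termF m (fun _ => 0) k l' lam Lm1 t) := tsum_congr hbx
            _ = (∑' x : {h : ℕ // t.1 0 < h}, (1 / ((x.1 : ℂ) - 1) - 1 / (x.1 : ℂ)))
                  * ((t.1 0 : ℂ) * termF m (fun _ => 0) k l' lam Lm1 t) := tsum_mul_right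
            _ = (1 / (t.1 0 : ℂ))
                  * ((t.1 0 : ℂ) * termF m (fun _ => 0) k l' lam Lm1 t) := by
                rw [(hasSum_tele_complex (t.1 0) ht1).tsum_eq]
            _ = termF m (fun _ => 0) k l' lam Lm1 t := by
                rw [← mul_assoc, one_div, inv_mul_cancel₀ ht0c, one_mul]
  rw [Summable.tsum_sub (hsA.mul_left lam) (hsC.mul_left (lam - 1)), tsum_mul_left, tsum_mul_left]
    at key
  linear_combination key
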